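/- Every walk in G between two boundary vertices b1, b2 ∈ B can be decomposed into consecutive segments, each of which either is a single edge of G joining two boundary vertices in different components, or lies entirely within a single component C_i and has both endpoints in B(C_i) ∪ {b1, b2}; in particular, the sequence of boundary vertices visited by the walk, taken in order, yields endpoints of segments whose within-component lengths are each at least the corresponding dist_{C_i} value. -/

import Mathlib

open scoped ENNReal

namespace SPQ

variable {V : Type*} {ι : Type*}

/-- The length of a walk: the sum of the weights `w` over its consecutive edges. -/
noncomputable def wlen (w : V → V → ℝ≥0∞) {G : SimpleGraph V} {u v : V} (p : G.Walk u v) : ℝ≥0∞ :=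
  (p.darts.map fun d => w d.toProd.1 d.toProd.2).sum

/-- The shortest-path distance: infimum of lengths of all walks (⊤ if none exists). -/
noncomputable def gdist (G : SimpleGraph V) (w : V → V → ℝ≥0∞) (u v : V) : ℝ≥0∞ :=
  ⨅ p : G.Walk u v, wlen w p

/-- The component `C_i`: the subgraph of `G` induced on `P ⁻¹ {i}`
(as a graph on `V`: edges of `G` with both endpoints mapped to `i` by `P`). -/
def comp (G : SimpleGraph V) (P : V → ι) (i : ι) : SimpleGraph V where
  Adj u v := G.Adj u v ∧ P u = i ∧ P v = i
  symm := ⟨fun _ _ h => ⟨h.1.symm, h.2.2, h.2.1⟩⟩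
  loopless := ⟨fun u h => G.irrefl h.1⟩

/-- The boundary `B(C_i)`: vertices of component `i` having a `G`-neighbor
in a different component. -/
def bdry (G : SimpleGraph V) (P : V → ι) (i : ι) : Set V :=
  {v | P v = i ∧ ∃ u, G.Adj v u ∧ P u ≠ i}

/-- The set `B` of all boundary vertices. -/
def bdryAll (G : SimpleGraph V) (P : V → ι) : Set V :=
  ⋃ i, bdry G P i

/-- The boundary graph `BG`: distinct boundary vertices `b1, b2` are adjacent
iff `P b1 = P b2` or `G.Adj b1 b2`. -/
def BGraph (G : SimpleGraph V) (P : V → ι) : SimpleGraph V where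
  Adj b1 b2 := b1 ≠ b2 ∧ b1 ∈ bdryAll G P ∧ b2 ∈ bdryAll G P ∧ (P b1 = P b2 ∨ G.Adj b1 b2)
  symm := by
    constructor
    intro u v h
    refine ⟨h.1.symm, h.2.2.1, h.2.1, ?_⟩
    rcases h.2.2.2 with h' | h'
    · exact Or.inl h'.symm
    · exact Or.inr h'.symm
  loopless := ⟨fun u h => h.1 rfl⟩

open Classical in
/-- The edge weight of the boundary graph:
`wt b1 b2 = dist_{C_{P b1}}(b1, b2)` if `P b1 = P b2`, and `w b1 b2` otherwise. -/
noncomputable def wt (G : SimpleGraph V) (P : V → ι) (w : V → V → ℝ≥0∞) (b1 b2 : V) : ℝ≥0∞ :=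
  if P b1 = P b2 then gdist (comp G P (P b1)) w b1 b2 else w b1 b2

/-- A decomposition of a walk into consecutive segments, each of which is either a
single edge of `G` joining two boundary vertices in different components, or lies
entirely within a single component `C_{P u}` with both endpoints in the allowed set `S`
(instantiated below with `B(C_i) ∪ {b1, b2}`, via `B ∪ {b1, b2}` together with the
within-component condition); each within-component segment's length is at least the
corresponding `dist_{C_i}` value between its endpoints. -/
inductive GoodDecomp (G : SimpleGraph V) (P : V → ι) (w : V → V → ℝ≥0∞) (S : Set V) :
    ∀ {u v : V}, G.Walk u v → Prop
  | nil {v : V} : GoodDecomp G P w S (SimpleGraph.Walk.nil : G.Walk v v)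
  | crossEdge {u v x : V} (h : G.Adj u v)
      (hu : u ∈ bdryAll G P) (hv : v ∈ bdryAll G P) (hne : P u ≠ P v)
      (p : G.Walk v x) :
      GoodDecomp G P w S p → GoodDecomp G P w S (SimpleGraph.Walk.cons h p)
  | inComp {u v x : V} (q : G.Walk u v) (hq : ∀ y ∈ q.support, P y = P u)
      (hu : u ∈ S) (hv : v ∈ S)
      (hlen : gdist (comp G P (P u)) w u v ≤ wlen w q)
      (p : G.Walk v x) :
      GoodDecomp G P w S p → GoodDecomp G P w S (q.append p)

end SPQ
namespace SPQ

open SimpleGraph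

lemma wlen_cons {V : Type*} (w : V → V → ℝ≥0∞) {G : SimpleGraph V} {u v x : V}
    (h : G.Adj u v) (p : G.Walk v x) :
    wlen w (Walk.cons h p) = w u v + wlen w p := by
  simp [wlen]

lemma wlen_transfer {V : Type*} (w : V → V → ℝ≥0∞) {G H : SimpleGraph V} {u v : V}
    (p : G.Walk u v) (hp : ∀ e ∈ p.edges, e ∈ H.edgeSet) :
    wlen w (p.transfer H hp) = wlen w p := by
  induction p with
  | nil => rfl
  | cons h p ih =>
    exact (wlen_cons (G := H) w _ (p.transfer H (fun e he => hp e (List.mem_cons_of_mem _ he)))).trans (by rw [ih, wlen_cons])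

lemma gdist_le_wlen {V : Type*} {ι : Type*} (G : SimpleGraph V) (P : V → ι)
    (w : V → V → ℝ≥0∞) {i : ι} {u v : V} (q : G.Walk u v)
    (hs : ∀ y ∈ q.support, P y = i) :
    gdist (comp G P i) w u v ≤ wlen w q := by
  have hedges : ∀ e ∈ q.edges, e ∈ (comp G P i).edgeSet := by
    intro e he
    induction e with
    | h x y =>
      refine (⟨q.adj_of_mem_edges he, ?_, ?_⟩ : G.Adj x y ∧ P x = i ∧ P y = i)
      · exact hs x (Walk.fst_mem_support_of_mem_edges q he)
      · exact hs y (Walk.snd_mem_support_of_mem_edges q he)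
  calc gdist (comp G P i) w u v ≤ wlen w (q.transfer _ hedges) := iInf_le _ _
    _ = wlen w q := wlen_transfer w q hedges

lemma split_comp {V : Type*} {ι : Type*} {G : SimpleGraph V} (P : V → ι) (i : ι) {b2 : V} :
    ∀ {a : V} (p : G.Walk a b2), P a = i →
    ∃ (v : V) (q : G.Walk a v) (r : G.Walk v b2),
      p = q.append r ∧ (∀ y ∈ q.support, P y = i) ∧
      (r.length = 0 ∨ ∃ (c : V) (h : G.Adj v c) (r' : G.Walk c b2),
        r = Walk.cons h r' ∧ P c ≠ i) := by
  intro a p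
  induction p with
  | nil =>
    intro ha
    exact ⟨_, Walk.nil, Walk.nil, rfl, by simpa using ha, Or.inl rfl⟩
  | @cons a c _ h p' ih =>
    intro ha
    by_cases hc : P c = i
    · obtain ⟨v, q, r, heq, hsupp, hcross⟩ := ih hc
      refine ⟨v, Walk.cons h q, r, ?_, ?_, hcross⟩
      · rw [Walk.cons_append, heq]
      · intro y hy
        rw [Walk.support_cons] at hy
        rcases List.mem_cons.mp hy with hy | hy
        · exact hy ▸ ha
        · exact hsupp y hy
    · exact ⟨a, Walk.nil, Walk.cons h p', by simp, by simpa using ha,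
        Or.inr ⟨c, h, p', rfl, hc⟩⟩

lemma decomp_aux {V : Type*} {ι : Type*} (G : SimpleGraph V) (P : V → ι)
    (w : V → V → ℝ≥0∞) (b1 b2 : V) :
    ∀ (n : ℕ) {a : V} (p : G.Walk a b2), p.length ≤ n →
      a ∈ bdryAll G P ∪ {b1, b2} →
      GoodDecomp G P w (bdryAll G P ∪ {b1, b2}) p := by
  intro n
  induction n with
  | zero =>
    intro a p hlen _
    cases p with
    | nil => exact GoodDecomp.nil
    | cons h p => simp at hlen
  | succ n ih =>
    intro a p hlen ha
    cases p with
    | nil => exact GoodDecomp.nil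
    | @cons _ c _ h p' =>
      by_cases hpc : P a = P c
      · obtain ⟨v, q₀, r, heq, hsupp, hcross⟩ := split_comp P (P a) p' hpc.symm
        have hQsupp : ∀ y ∈ (Walk.cons h q₀).support, P y = P a := by
          intro y hy
          rw [Walk.support_cons] at hy
          rcases List.mem_cons.mp hy with hy | hy
          · exact hy ▸ rfl
          · exact hsupp y hy
        have hPv : P v = P a := hQsupp v (by
          rw [Walk.support_cons]
          exact List.mem_cons_of_mem _ (Walk.end_mem_support q₀))
        have hv : v ∈ bdryAll G P ∪ {b1, b2} := by
          rcases hcross with h0 | ⟨c', hadj, r', _, hc'⟩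
          · have := Walk.eq_of_length_eq_zero h0
            subst this
            exact Or.inr (by simp)
          · refine Or.inl (Set.mem_iUnion.mpr ⟨P v, rfl, c', hadj, ?_⟩)
            rw [hPv]; exact hc'
        have hrlen : r.length ≤ n := by
          have h1 : p'.length ≤ n := by simpa using hlen
          have h2 : p'.length = q₀.length + r.length := by
            rw [heq, Walk.length_append]
          omega
        have heq2 : Walk.cons h p' = (Walk.cons h q₀).append r := by
          rw [Walk.cons_append, heq]
        rw [heq2]
        exact GoodDecomp.inComp (Walk.cons h q₀) hQsupp ha hv
          (gdist_le_wlen G P w _ hQsupp) r (ih r hrlen hv)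
      · have ha' : a ∈ bdryAll G P :=
          Set.mem_iUnion.mpr ⟨P a, rfl, c, h, fun hh => hpc hh.symm⟩
        have hc' : c ∈ bdryAll G P :=
          Set.mem_iUnion.mpr ⟨P c, rfl, a, h.symm, hpc⟩
        exact GoodDecomp.crossEdge h ha' hc' hpc p'
          (ih p' (by simpa using hlen) (Or.inl hc'))

/-- Every walk in `G` between two boundary vertices `b1, b2 ∈ B` can be
decomposed into consecutive segments, each of which either is a single edge of `G`
joining two boundary vertices in different components, or lies entirely within a single
component `C_i` and has both endpoints in `B(C_i) ∪ {b1, b2}`; in particular, the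
sequence of boundary vertices visited by the walk, taken in order, yields endpoints of
segments whose within-component lengths are each at least the corresponding
`dist_{C_i}` value. -/
theorem stmt14 {V : Type*} {ι : Type*} [Fintype V] [Fintype ι]
    (G : SimpleGraph V) (w : V → V → ℝ≥0∞)
    (hsymm : ∀ u v, w u v = w v u) (hfin : ∀ u v, G.Adj u v → w u v < ⊤)
    (P : V → ι) (b1 b2 : V)
    (hb1 : b1 ∈ bdryAll G P) (hb2 : b2 ∈ bdryAll G P)
    (π : G.Walk b1 b2) :
    GoodDecomp G P w (bdryAll G P ∪ {b1, b2}) π :=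
  decomp_aux G P w b1 b2 π.length π le_rfl (Or.inl hb1)
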